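/- A twig query q is implied by a disjunction-free multiplicity schema S (every tree satisfying S satisfies q) if and only if q can be embedded in the universal dependency graph G_S^u of S. -/
import Mathlib


open scoped Classical

variable {α : Type}

/-- Unordered words: multisets of symbols, as occurrence-count functions. -/
abbrev UWord (α : Type) := α → ℕ

/-- Multiplicities `*`, `+`, `?`, `0`, `1`. -/
inductive Mult : Type where
  | zero | one | opt | plus | star
deriving DecidableEq

/-- Interpretation of multiplicities as sets of natural numbers. -/
def Mult.sem : Mult → Set ℕ
  | .zero => {0}
  | .one => {1}
  | .opt => {0, 1}
  | .plus => {n | 0 < n}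
  | .star => Set.univ

/-- A disjunction `a₁^{M₁} | … | a_k^{M_k}`. -/
abbrev Disj (α : Type) := List (α × Mult)

/-- A disjunctive multiplicity expression `D₁^{M₁} ⊎ … ⊎ D_n^{M_n}`. -/
abbrev DME (α : Type) := List (Disj α × Mult)

/-- Language of `a^M`. -/
def singleLang (a : α) (m : Mult) : Set (UWord α) :=
  {w | w a ∈ m.sem ∧ ∀ b, b ≠ a → w b = 0}

/-- Language of a disjunction. -/
def disjLang (D : Disj α) : Set (UWord α) :=
  {w | ∃ p ∈ D, w ∈ singleLang p.1 p.2}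

/-- Pointwise (multiset) sum of a list of unordered words. -/
def sumWords (ws : List (UWord α)) : UWord α := fun a => (ws.map (fun u => u a)).sum

/-- Language of `D^M`. -/
def powLang (L : Set (UWord α)) (m : Mult) : Set (UWord α) :=
  {w | ∃ ws : List (UWord α), ws.length ∈ m.sem ∧ (∀ u ∈ ws, u ∈ L) ∧ w = sumWords ws}

/-- Language of a disjunctive multiplicity expression. -/
def dmeLang (E : DME α) : Set (UWord α) :=
  {w | ∃ ws : List (UWord α),
      List.Forall₂ (fun p u => u ∈ powLang (disjLang p.1) p.2) E ws ∧ w = sumWords ws}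

/-- Symbols occurring in a disjunctive multiplicity expression. -/
def dmeSymbols (E : DME α) : List α := E.flatMap (fun p => p.1.map Prod.fst)

/-- Normalized disjunctive multiplicity expression (each symbol occurs at most once,
each disjunction nonempty, and the two normal-form conditions of the paper). -/
def Normalized (E : DME α) : Prop :=
  (dmeSymbols E).Nodup ∧
  ∀ p ∈ E, p.1 ≠ [] ∧
    (p.2 ≠ Mult.one → p.2 = Mult.plus ∧ ∀ q ∈ p.1, q.2 = Mult.one) ∧
    ((∃ q ∈ p.1, (0 : ℕ) ∈ q.2.sem) → ∀ q ∈ p.1, (0 : ℕ) ∈ q.2.sem)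

/-- Conflicting pairs of siblings `C_E`. -/
def CE (E : DME α) : Set (α × α) :=
  {p | ¬ ∃ w ∈ dmeLang E, w p.1 ≠ 0 ∧ w p.2 ≠ 0}

/-- Extended cardinality map `N_E`. -/
def NE (E : DME α) : Set (α × ℕ) :=
  {p | ∃ w ∈ dmeLang E, w p.1 = p.2}

/-- Sets of required symbols `P_E`. -/
def PE (E : DME α) : Set (Set α) :=
  {X | ∀ w ∈ dmeLang E, ∃ a ∈ X, w a ≠ 0}

/-- Consistency of an unordered word with a characterizing triple. -/
def ConsTriple (w : UWord α) (C : Set (α × α)) (N : Set (α × ℕ)) (P : Set (Set α)) : Prop :=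
  (∀ p ∈ C, ¬ (w p.1 ≠ 0 ∧ w p.2 ≠ 0)) ∧
  (∀ a, (a, w a) ∈ N) ∧
  (∀ X ∈ P, ∃ a ∈ X, w a ≠ 0)

/-- Language of a disjunction-free multiplicity expression given as a list of
symbol/multiplicity pairs. -/
def dfLang (l : List (α × Mult)) : Set (UWord α) :=
  {w | (∀ p ∈ l, w p.1 ∈ p.2.sem) ∧ ∀ b, b ∉ l.map Prod.fst → w b = 0}

/-- Finite unordered trees. -/
inductive UTree (α : Type) : Type where
  | node : α → List (UTree α) → UTree α

def UTree.lab : UTree α → α | .node a _ => a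

def UTree.children : UTree α → List (UTree α) | .node _ ts => ts

/-- Twig queries: labels in `Σ ∪ {⋆}` (wildcard = `none`); each child subquery is tagged
with `false` for a child edge and `true` for a descendant edge. -/
inductive Twig (α : Type) : Type where
  | node : Option α → List (Twig α × Bool) → Twig α

/-- Proper subtree (proper descendant) relation. -/
inductive StrictDesc : UTree α → UTree α → Prop where
  | child {s t : UTree α} : s ∈ t.children → StrictDesc s t
  | step {s u t : UTree α} : StrictDesc s u → u ∈ t.children → StrictDesc s t

/-- `Sat t q`: the twig query `q` can be embedded in the tree `t`
(root to root, child edges to child edges, descendant edges to proper descendants,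
labels preserved up to wildcard). -/
def Sat : UTree α → Twig α → Prop
  | t, .node l qs =>
      (∀ x ∈ l, x = t.lab) ∧
      ∀ p ∈ qs, (p.2 = false → ∃ t' ∈ t.children, Sat t' p.1) ∧
                (p.2 = true → ∃ t', StrictDesc t' t ∧ Sat t' p.1)
termination_by t q => sizeOf q
decreasing_by
  all_goals
    obtain ⟨q', b'⟩ := p
    have h1 : sizeOf ((q', b') : Twig α × Bool) < sizeOf qs := List.sizeOf_lt_of_mem (by assumption)
    simp at h1 ⊢
    omega

/-- `TEmb t' t` : the tree `t'` can be embedded in the tree `t` (root-, child-, and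
label-preserving). -/
def TEmb : UTree α → UTree α → Prop
  | .node a ts', t => t.lab = a ∧ ∀ s' ∈ ts', ∃ s ∈ t.children, TEmb s' s

/-- `QGEmb E a q` : the twig query `q` can be embedded in the rooted graph with edge
relation `E` at root `a`. -/
def QGEmb (E : α → α → Prop) : α → Twig α → Prop
  | a, .node l qs =>
      (∀ x ∈ l, x = a) ∧
      ∀ p ∈ qs, (p.2 = false → ∃ b, E a b ∧ QGEmb E b p.1) ∧
                (p.2 = true → ∃ b, Relation.TransGen E a b ∧ QGEmb E b p.1)
termination_by a q => sizeOf q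
decreasing_by
  all_goals
    obtain ⟨q', b'⟩ := p
    have h1 : sizeOf ((q', b') : Twig α × Bool) < sizeOf qs := List.sizeOf_lt_of_mem (by assumption)
    simp at h1 ⊢
    omega

/-- Labeled paths of a tree: sequences of labels along root-to-node paths. -/
inductive IsLabPath : UTree α → List α → Prop where
  | root {a : α} {ts : List (UTree α)} : IsLabPath (UTree.node a ts) [a]
  | cons {a : α} {ts : List (UTree α)} {s : UTree α} {p : List α} :
      s ∈ ts → IsLabPath s p → IsLabPath (UTree.node a ts) (a :: p)

/-- Paths of a rooted graph: nonempty vertex sequences starting at the root and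
following edges. -/
def IsGPath (E : α → α → Prop) (root : α) (p : List α) : Prop :=
  p ≠ [] ∧ p.head? = some root ∧ p.Chain' E

/-- The unfolding of a rooted graph, truncated at depth `n`.  For a graph with no cycle
reachable from the root, taking `n = Fintype.card α` yields the full unfolding. -/
noncomputable def unfoldG [Fintype α] (E : α → α → Prop) : ℕ → α → UTree α
  | 0, a => .node a []
  | n + 1, a => .node a (((Finset.univ.filter fun b => E a b).toList).map (unfoldG E n))

/-- Number of leaves of a tree. -/
def leafCount : UTree α → ℕ
  | .node _ ts => if ts.isEmpty then 1 else (ts.attach.map (fun s => leafCount s.1)).sum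
decreasing_by
  have h1 := List.sizeOf_lt_of_mem s.2
  simp
  omega

/-- Disjunction-free multiplicity schema: a root label together with, for each label `a`,
a disjunction-free multiplicity expression given as the multiplicity `R a b` of every
symbol `b` (`Mult.zero` meaning `b` does not occur). -/
structure MS (α : Type) where
  root : α
  R : α → α → Mult

/-- Every node's children-label multiset matches the rule for the node's label. -/
inductive LocalOK [DecidableEq α] (R : α → α → Mult) : UTree α → Prop where
  | node {a : α} {ts : List (UTree α)} :
      (∀ b, ((ts.map UTree.lab).count b) ∈ (R a b).sem) →
      (∀ s ∈ ts, LocalOK R s) →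
      LocalOK R (UTree.node a ts)

/-- A tree satisfies a disjunction-free multiplicity schema. -/
def SatS [DecidableEq α] (S : MS α) (t : UTree α) : Prop :=
  t.lab = S.root ∧ LocalOK S.R t

/-- Edges of the universal dependency graph: `b` occurs in `R a` with multiplicity `+` or `1`. -/
def uEdge (S : MS α) (a b : α) : Prop := S.R a b = Mult.plus ∨ S.R a b = Mult.one

/-- Edges of the dependency graph: `b` occurs in `R a` with multiplicity in `{*,+,?,1}`. -/
def dEdge (S : MS α) (a b : α) : Prop := S.R a b ≠ Mult.zero

/-- A simulation of the rooted graph `(α, root, E)` in the tree `t`. -/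
def IsSimulation (E : α → α → Prop) (root : α) (t : UTree α) (R : α → UTree α → Prop) : Prop :=
  R root t ∧ (∀ a s, R a s → s.lab = a) ∧
  (∀ a s, R a s → ∀ b, E a b → ∃ s' ∈ s.children, R b s')

/-- One fuse step: two sibling nodes with the same label are merged into a single node
whose children are the children of both (applied anywhere in the tree). -/
inductive Fuse : UTree α → UTree α → Prop where
  | here {a b : α} {l₁ l₂ l₃ cs₁ cs₂ : List (UTree α)} :
      Fuse (UTree.node a (l₁ ++ UTree.node b cs₁ :: l₂ ++ UTree.node b cs₂ :: l₃))
           (UTree.node a (l₁ ++ UTree.node b (cs₁ ++ cs₂) :: l₂ ++ l₃))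
  | there {a : α} {s s' : UTree α} {l₁ l₂ : List (UTree α)} :
      Fuse s s' → Fuse (UTree.node a (l₁ ++ s :: l₂)) (UTree.node a (l₁ ++ s' :: l₂))

/-- One add step: an arbitrary new subtree is attached as an additional child of some
node of the tree. -/
inductive AddOp : UTree α → UTree α → Prop where
  | here {a : α} {s : UTree α} {l : List (UTree α)} :
      AddOp (UTree.node a l) (UTree.node a (s :: l))
  | there {a : α} {s s' : UTree α} {l₁ l₂ : List (UTree α)} :
      AddOp s s' → AddOp (UTree.node a (l₁ ++ s :: l₂)) (UTree.node a (l₁ ++ s' :: l₂))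

section Aux

variable [Fintype α] [DecidableEq α]

lemma unfoldG_lab (E : α → α → Prop) (n : ℕ) (a : α) : (unfoldG E n a).lab = a := by
  cases n <;> rfl

lemma unfoldG_children (E : α → α → Prop) (n : ℕ) (a : α) (t' : UTree α) :
    t' ∈ (unfoldG E (n+1) a).children ↔ ∃ b, E a b ∧ t' = unfoldG E n b := by
  simp only [unfoldG, UTree.children, List.mem_map, Finset.mem_toList, Finset.mem_filter,
    Finset.mem_univ, true_and]
  constructor
  · rintro ⟨b, hb, rfl⟩; exact ⟨b, hb, rfl⟩
  · rintro ⟨b, hb, rfl⟩; exact ⟨b, hb, rfl⟩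

lemma strictDesc_unfoldG (E : α → α → Prop) {t' t : UTree α} (h : StrictDesc t' t) :
    ∀ n a, t = unfoldG E n a →
      ∃ m b, m < n ∧ Relation.TransGen E a b ∧ t' = unfoldG E m b := by
  induction h with
  | child hmem =>
    intro n a ht
    cases n with
    | zero =>
      exfalso; subst ht; simp [unfoldG, UTree.children] at hmem
    | succ m =>
      subst ht
      obtain ⟨b, hb, rfl⟩ := (unfoldG_children E m a _).mp hmem
      exact ⟨m, b, Nat.lt_succ_self m, Relation.TransGen.single hb, rfl⟩
  | step hsu hmem ih =>
    intro n a ht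
    cases n with
    | zero =>
      exfalso; subst ht; simp [unfoldG, UTree.children] at hmem
    | succ m =>
      subst ht
      obtain ⟨b, hb, rfl⟩ := (unfoldG_children E m a _).mp hmem
      obtain ⟨m', c, hm', htr, rfl⟩ := ih m b rfl
      exact ⟨m', c, hm'.trans (Nat.lt_succ_self m), Relation.TransGen.head hb htr, rfl⟩

theorem satUnfold_to_qgemb (E : α → α → Prop) :
    ∀ (q : Twig α) (n : ℕ) (a : α), Sat (unfoldG E n a) q → QGEmb E a q
  | .node l qs => by
    intro n a hsat
    rw [Sat] at hsat
    rw [QGEmb]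
    obtain ⟨hl, hqs⟩ := hsat
    refine ⟨fun x hx => by rw [hl x hx, unfoldG_lab], fun p hp => ?_⟩
    have hsz : sizeOf p.1 < 1 + sizeOf l + sizeOf qs := by
      obtain ⟨q', b'⟩ := p
      have h1 : sizeOf ((q', b') : Twig α × Bool) < sizeOf qs := List.sizeOf_lt_of_mem hp
      simp at h1 ⊢
      omega
    constructor
    · intro hb
      obtain ⟨t', ht'mem, ht'sat⟩ := (hqs p hp).1 hb
      cases n with
      | zero => exfalso; simp [unfoldG, UTree.children] at ht'mem
      | succ m =>
        obtain ⟨b, hab, rfl⟩ := (unfoldG_children E m a t').mp ht'mem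
        exact ⟨b, hab, satUnfold_to_qgemb E p.1 m b ht'sat⟩
    · intro hb
      obtain ⟨t', hdesc, ht'sat⟩ := (hqs p hp).2 hb
      obtain ⟨m, b, _, htr, rfl⟩ := strictDesc_unfoldG E hdesc n a rfl
      exact ⟨b, htr, satUnfold_to_qgemb E p.1 m b ht'sat⟩
termination_by q => sizeOf q

lemma localOK_child {R : α → α → Mult} {a : α} {ts : List (UTree α)}
    (h : LocalOK R (UTree.node a ts)) {s : UTree α} (hs : s ∈ ts) : LocalOK R s := by
  cases h with | node _ h2 => exact h2 s hs

lemma child_exists (S : MS α) {t : UTree α} (hok : LocalOK S.R t) {b : α}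
    (he : uEdge S t.lab b) :
    ∃ s ∈ t.children, s.lab = b ∧ LocalOK S.R s := by
  obtain ⟨a, ts⟩ := t
  cases hok with
  | node hcount hch =>
    have hc := hcount b
    have hpos : 0 < (ts.map UTree.lab).count b := by
      have he' : S.R a b = Mult.plus ∨ S.R a b = Mult.one := he
      rcases he' with h | h
      · rw [h] at hc
        simpa [Mult.sem] using hc
      · rw [h] at hc
        simp only [Mult.sem, Set.mem_singleton_iff] at hc
        omega
    have hmem : b ∈ ts.map UTree.lab := List.count_pos_iff.mp hpos
    obtain ⟨s, hs, hlab⟩ := List.mem_map.mp hmem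
    exact ⟨s, hs, hlab, hch s hs⟩

lemma strictDesc_extend {s t s' : UTree α} (h : StrictDesc s t) :
    s' ∈ s.children → StrictDesc s' t := by
  induction h with
  | child hmem => exact fun hs' => StrictDesc.step (StrictDesc.child hs') hmem
  | step hsu hmem ih => exact fun hs' => StrictDesc.step (ih hs') hmem

lemma desc_exists (S : MS α) {t : UTree α} (hok : LocalOK S.R t) {b : α}
    (h : Relation.TransGen (uEdge S) t.lab b) :
    ∃ s, StrictDesc s t ∧ s.lab = b ∧ LocalOK S.R s := by
  induction h with
  | single hab =>
    obtain ⟨s, hmem, hlab, hsok⟩ := child_exists S hok hab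
    exact ⟨s, StrictDesc.child hmem, hlab, hsok⟩
  | tail _ hcb ih =>
    obtain ⟨s, hdesc, hlab, hsok⟩ := ih
    obtain ⟨s', hmem, hlab', hsok'⟩ := child_exists S hsok (hlab ▸ hcb)
    exact ⟨s', strictDesc_extend hdesc hmem, hlab', hsok'⟩

theorem qgemb_to_sat (S : MS α) :
    ∀ (q : Twig α) (t : UTree α), LocalOK S.R t → QGEmb (uEdge S) t.lab q → Sat t q
  | .node l qs => by
    intro t hok hemb
    rw [QGEmb] at hemb
    rw [Sat]
    obtain ⟨hl, hqs⟩ := hemb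
    refine ⟨hl, fun p hp => ?_⟩
    have hsz : sizeOf p.1 < 1 + sizeOf l + sizeOf qs := by
      obtain ⟨q', b'⟩ := p
      have h1 : sizeOf ((q', b') : Twig α × Bool) < sizeOf qs := List.sizeOf_lt_of_mem hp
      simp at h1 ⊢
      omega
    constructor
    · intro hb
      obtain ⟨c, hac, hq⟩ := (hqs p hp).1 hb
      obtain ⟨s, hmem, hlab, hsok⟩ := child_exists S hok hac
      exact ⟨s, hmem, qgemb_to_sat S p.1 s hsok (hlab ▸ hq)⟩
    · intro hb
      obtain ⟨c, hac, hq⟩ := (hqs p hp).2 hb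
      obtain ⟨s, hdesc, hlab, hsok⟩ := desc_exists S hok hac
      exact ⟨s, hdesc, qgemb_to_sat S p.1 s hsok (hlab ▸ hq)⟩
termination_by q => sizeOf q
decreasing_by all_goals (simp only [Twig.node.sizeOf_spec]; omega)

/-- Measure: number of strict descendants in the universal dependency graph. -/
noncomputable def uMeasure (S : MS α) (a : α) : ℕ :=
  (Finset.univ.filter fun b => Relation.TransGen (uEdge S) a b).card

lemma uMeasure_lt (S : MS α) (hpruned : ∀ a : α, ¬ Relation.TransGen (uEdge S) a a)
    {a b : α} (h : uEdge S a b) : uMeasure S b < uMeasure S a := by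
  apply Finset.card_lt_card
  constructor
  · intro c hc
    simp only [Finset.mem_filter, Finset.mem_univ, true_and] at hc ⊢
    exact Relation.TransGen.head h hc
  · intro hsub
    have hb : b ∈ Finset.univ.filter fun c => Relation.TransGen (uEdge S) a c := by
      simp only [Finset.mem_filter, Finset.mem_univ, true_and]
      exact Relation.TransGen.single h
    have := hsub hb
    simp only [Finset.mem_filter, Finset.mem_univ, true_and] at this
    exact hpruned b this

lemma uMeasure_lt_card (S : MS α) (hpruned : ∀ a : α, ¬ Relation.TransGen (uEdge S) a a)
    (a : α) : uMeasure S a < Fintype.card α := by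
  rw [← Finset.card_univ]
  apply Finset.card_lt_card
  constructor
  · exact Finset.filter_subset _ _
  · intro hsub
    have := hsub (Finset.mem_univ a)
    simp only [Finset.mem_filter, Finset.mem_univ, true_and] at this
    exact hpruned a this

lemma unfoldG_localOK (S : MS α) (hpruned : ∀ a : α, ¬ Relation.TransGen (uEdge S) a a) :
    ∀ (n : ℕ) (a : α), uMeasure S a < n → LocalOK S.R (unfoldG (uEdge S) n a) := by
  intro n
  induction n with
  | zero => intro a h; omega
  | succ m ih =>
    intro a ha
    show LocalOK S.R (UTree.node a _)
    have hlabs : (((Finset.univ.filter fun b => uEdge S a b).toList).map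
        (unfoldG (uEdge S) m)).map UTree.lab = (Finset.univ.filter fun b => uEdge S a b).toList := by
      rw [List.map_map]
      exact List.map_congr_left (fun b _ => unfoldG_lab _ _ _) |>.trans (List.map_id _)
    constructor
    · intro b
      rw [hlabs]
      by_cases hb : uEdge S a b
      · have hmem : b ∈ (Finset.univ.filter fun c => uEdge S a c).toList := by
          simp [hb]
        rw [List.count_eq_one_of_mem (Finset.nodup_toList _) hmem]
        rcases hb with h | h <;> rw [h] <;> simp [Mult.sem]
      · have hmem : b ∉ (Finset.univ.filter fun c => uEdge S a c).toList := by
          simp [hb]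
        rw [List.count_eq_zero_of_not_mem hmem]
        cases hR : S.R a b <;> simp [Mult.sem]
        · exact hb (Or.inr hR)
        · exact hb (Or.inl hR)
    · intro s hs
      obtain ⟨b, hbmem, rfl⟩ := List.mem_map.mp hs
      simp only [Finset.mem_toList, Finset.mem_filter, Finset.mem_univ, true_and] at hbmem
      exact ih b (by have := uMeasure_lt S hpruned hbmem; omega)

end Aux

/-- Lemma 7(2): a twig query is implied by a pruned, satisfiable
disjunction-free multiplicity schema iff it embeds in the universal dependency graph. -/
theorem query_implication_iff_embedding_in_universal_graph
    {α : Type} [Fintype α] [DecidableEq α] (S : MS α)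
    (hpruned : ∀ a : α, ¬ Relation.TransGen (uEdge S) a a)
    (hsat : ∃ t : UTree α, SatS S t) (q : Twig α) :
    (∀ t : UTree α, SatS S t → Sat t q) ↔ QGEmb (uEdge S) S.root q := by
  constructor
  · intro h
    have hok : LocalOK S.R (unfoldG (uEdge S) (Fintype.card α) S.root) :=
      unfoldG_localOK S hpruned _ _ (uMeasure_lt_card S hpruned S.root)
    have hsatS : SatS S (unfoldG (uEdge S) (Fintype.card α) S.root) :=
      ⟨unfoldG_lab _ _ _, hok⟩
    exact satUnfold_to_qgemb (uEdge S) q (Fintype.card α) S.root (h _ hsatS)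
  · rintro h t ⟨hlab, hok⟩
    exact qgemb_to_sat S q t hok (by rw [hlab]; exact h)
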